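/- Let G be a one-vertex embedding scheme whose loops are all either orienting or two-sided non-separating, with at least one of each. Then there is an orienting loop o immediately followed in the rotation by a two-sided non-separating loop t. If G′ is obtained from G by replacing o with the loop o′ that is the concatenation of o and t, and G″ is obtained from G′ by applying the one-sided loop move on o′, then t is an orienting loop of G″. -/

import Mathlib

/-- A one-vertex embedding scheme: `n` loops, whose `2*n` half-edge ends occupy
(bijectively) the `2*n` cyclic positions around the unique vertex, together with a
signature for each loop (`sign e = true` means signature `-1`, i.e. the loop is
one-sided; `sign e = false` means signature `+1`, i.e. the loop is two-sided). -/
structure OneVertexScheme where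
  n : ℕ
  ends : Fin n ⊕ Fin n ≃ Fin (2 * n)
  sign : Fin n → Bool

namespace OneVertexScheme

variable (S : OneVertexScheme)

/-- The position of the first end of loop `e` in the rotation around the vertex. -/
def endA (e : Fin S.n) : Fin (2 * S.n) := S.ends (Sum.inl e)

/-- The position of the second end of loop `e` in the rotation around the vertex. -/
def endB (e : Fin S.n) : Fin (2 * S.n) := S.ends (Sum.inr e)

/-- Clockwise cyclic distance from position `a` to position `x`. -/
def cdist (a x : Fin (2 * S.n)) : ℕ := (x.val + 2 * S.n - a.val) % (2 * S.n)

/-- `x` lies strictly inside the wedge of loop `e` going clockwise from `endA e`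
to `endB e`. -/
def InWedge (e : Fin S.n) (x : Fin (2 * S.n)) : Prop :=
  0 < S.cdist (S.endA e) x ∧ S.cdist (S.endA e) x < S.cdist (S.endA e) (S.endB e)

/-- Auxiliary alternation relation: exactly one end of `f` lies strictly inside the
wedge of `e`. -/
def altAux (e f : Fin S.n) : Prop :=
  Xor' (S.InWedge e (S.endA f)) (S.InWedge e (S.endB f))

/-- The interleaving graph `I_G` of the scheme: one vertex per loop, two loops being
adjacent exactly when their ends alternate around the vertex. -/
def interleavingGraph : SimpleGraph (Fin S.n) := SimpleGraph.fromRel (fun e f => S.altAux e f)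

/-- The ends of the loops `e` and `f` alternate around the vertex. -/
def Alternate (e f : Fin S.n) : Prop := S.interleavingGraph.Adj e f

/-- The ends of the loop `e` enclose the ends of the loop `f`. -/
def Encloses (e f : Fin S.n) : Prop := e ≠ f ∧ ¬ S.Alternate e f

/-- A loop is one-sided if its signature is `-1`. -/
def OneSided (e : Fin S.n) : Prop := S.sign e = true

/-- A loop is two-sided if its signature is `+1`. -/
def TwoSided (e : Fin S.n) : Prop := S.sign e = false

/-- A one-vertex scheme is orientable iff every loop (cycle) of it is two-sided. -/
def Orientable : Prop := ∀ e, S.TwoSided e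

/-- A loop `o` is orienting: cutting the underlying surface along `o` yields a connected
orientable surface.  Combinatorially, the ends of `o` alternate with the ends of every
one-sided loop and enclose the ends of every two-sided loop of the scheme. -/
def IsOrienting (o : Fin S.n) : Prop :=
  ∀ e, e ≠ o → (S.Alternate o e ↔ S.OneSided e)

/-- A loop of a one-vertex scheme is separating iff it is two-sided and no other loop
alternates with it (equivalently, its mod 2 intersection number with every cycle
vanishes). -/
def Separating (s : Fin S.n) : Prop := S.TwoSided s ∧ ∀ e, e ≠ s → ¬ S.Alternate s e

/-- A contractible loop (in reduced form): a two-sided loop one of whose wedges contains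
no end of any other loop, so that it bounds a disk. -/
def Contractible (s : Fin S.n) : Prop :=
  S.TwoSided s ∧
    ((∀ e, e ≠ s → ¬ S.InWedge s (S.endA e) ∧ ¬ S.InWedge s (S.endB e)) ∨
     (∀ e, e ≠ s → S.InWedge s (S.endA e) ∧ S.InWedge s (S.endB e)))

/-- The successor rotation on the `2*n` cyclic positions around the vertex. -/
def rot : Equiv.Perm (Fin (2 * S.n)) := finRotate (2 * S.n)

/-- The involution exchanging the positions of the two ends of each loop. -/
def partner : Equiv.Perm (Fin (2 * S.n)) :=
  (S.ends.symm.trans (Equiv.sumComm _ _)).trans S.ends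

/-- The loop having an end at a given position. -/
def loopAt (p : Fin (2 * S.n)) : Fin S.n := Sum.elim id id (S.ends.symm p)

/-- One step of the face-tracing procedure on sided positions: traverse the loop whose
end is at the current position (flipping the side if the loop is one-sided) and turn to
the next corner around the vertex. -/
def faceStep : Fin (2 * S.n) × Bool → Fin (2 * S.n) × Bool :=
  fun x =>
    let s' := Bool.xor x.2 (S.sign (S.loopAt x.1))
    (if s' then S.rot (S.partner x.1) else S.rot.symm (S.partner x.1), s')

/-- Two sided positions lie on the boundary walk of the same face. -/
def faceRel (x y : Fin (2 * S.n) × Bool) : Prop :=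
  ∃ j k : ℕ, S.faceStep^[j] x = S.faceStep^[k] y

/-- The number of faces of the cellular embedding determined by the scheme (each face is
traced twice by the face-tracing procedure, once on each side). -/
noncomputable def numFaces : ℕ := Nat.card (Quot S.faceRel) / 2

/-- The Euler genus of the closed surface in which the scheme embeds cellularly:
`eg = 2 - χ = 2 - (1 - n + f)`. -/
noncomputable def eulerGenus : ℤ := 1 + (S.n : ℤ) - (S.numFaces : ℤ)

end OneVertexScheme

/-- A cross-cap drawing of a one-vertex scheme with `k` cross-caps, recorded through the
number of times each loop passes through each cross-cap.  A drawing realizing the scheme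
must in particular satisfy that a loop is one-sided exactly when it passes through an odd
total number of cross-caps. -/
structure CrossCapDrawing (S : OneVertexScheme) where
  k : ℕ
  passes : Fin S.n → Fin k → ℕ
  realizes : ∀ e, (S.sign e = true ↔ Odd (∑ c, passes e c))

/-- `S'` is obtained from `S` by removing the contractible loop `c`; `ι` identifies the
loops of `S'` with the loops of `S` other than `c`. -/
def IsContractibleLoopRemoval (S : OneVertexScheme) (c : Fin S.n) (S' : OneVertexScheme)
    (ι : Fin S'.n → Fin S.n) : Prop :=
  S.Contractible c ∧ S'.n + 1 = S.n ∧ Function.Injective ι ∧ (∀ e, ι e ≠ c) ∧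
  (∀ e, S'.sign e = S.sign (ι e)) ∧
  (∀ e f, S'.Alternate e f ↔ S.Alternate (ι e) (ι f))

/-- `S'` is obtained from `S` by the one-sided loop move on the one-sided loop `r`:
`r` is removed and one of its wedges is flipped.  `ι` identifies the loops of `S'` with
the loops of `S` other than `r`; the effect on the signatures and on the interleaving
graph is: every former neighbour of `r` changes sidedness, the subgraph induced by the
neighbours of `r` is complemented, and everything else is unchanged. -/
def IsOneSidedLoopMove (S : OneVertexScheme) (r : Fin S.n) (S' : OneVertexScheme)
    (ι : Fin S'.n → Fin S.n) : Prop :=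
  S.OneSided r ∧ S'.n + 1 = S.n ∧ Function.Injective ι ∧ (∀ e, ι e ≠ r) ∧
  (∀ e, S.Alternate r (ι e) → S'.sign e = !(S.sign (ι e))) ∧
  (∀ e, ¬ S.Alternate r (ι e) → S'.sign e = S.sign (ι e)) ∧
  (∀ e f, e ≠ f → S.Alternate r (ι e) → S.Alternate r (ι f) →
      (S'.Alternate e f ↔ ¬ S.Alternate (ι e) (ι f))) ∧
  (∀ e f, ¬ (S.Alternate r (ι e) ∧ S.Alternate r (ι f)) →
      (S'.Alternate e f ↔ S.Alternate (ι e) (ι f)))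

/-- An end of the loop `o` is immediately followed by an end of the loop `t` in the
rotation around the vertex. -/
def OneVertexScheme.AdjacentEnds (S : OneVertexScheme) (o t : Fin S.n) : Prop :=
  ∃ p q : Fin (2 * S.n), (p = S.endA o ∨ p = S.endB o) ∧ (q = S.endA t ∨ q = S.endB t) ∧
    (S.cdist p q = 1 ∨ S.cdist q p = 1)

/-- `S'` is obtained from `S` by replacing the loop `o` (one of whose ends is immediately
followed by an end of `t`) by the concatenation `o' = o·t` of `o` and `t`; `ι` is the
identification of the loops. -/
def IsConcatenationReplace (S : OneVertexScheme) (o t : Fin S.n) (S' : OneVertexScheme)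
    (ι : Fin S.n → Fin S'.n) : Prop :=
  o ≠ t ∧ S.AdjacentEnds o t ∧ S'.n = S.n ∧ Function.Bijective ι ∧
  (∀ e, e ≠ o → S'.sign (ι e) = S.sign e) ∧
  (S'.sign (ι o) = Bool.xor (S.sign o) (S.sign t)) ∧
  (∀ e f, e ≠ o → f ≠ o → (S'.Alternate (ι e) (ι f) ↔ S.Alternate e f)) ∧
  (∀ e, e ≠ o → e ≠ t → (S'.Alternate (ι o) (ι e) ↔ Xor' (S.Alternate o e) (S.Alternate t e))) ∧
  ¬ S'.Alternate (ι o) (ι t)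

/-- Let `G` be a one-vertex embedding scheme whose loops are all
either orienting or two-sided non-separating, with at least one of each.  Then there is
an orienting loop `o` immediately followed in the rotation by a two-sided non-separating
loop `t`; and whenever `G'` is obtained from `G` by replacing such an `o` with the loop
`o'` that is the concatenation of `o` and `t`, and `G''` is obtained from `G'` by
applying the one-sided loop move on `o'`, the loop `t` is an orienting loop of `G''`. -/
lemma OneVertexScheme.cdist_add_one (S : OneVertexScheme) [NeZero (2 * S.n)] (h : 1 < 2 * S.n)
    (p : Fin (2 * S.n)) : S.cdist p (p + 1) = 1 := by
  have hp := p.isLt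
  have h1 : (1 : Fin (2 * S.n)).val = 1 := by
    simp [Fin.val_one', Nat.mod_eq_of_lt h]
  have hadd : (p + 1).val = (p.val + 1) % (2 * S.n) := by
    rw [Fin.add_def, h1]
  unfold OneVertexScheme.cdist
  rw [hadd]
  rcases Nat.lt_or_ge (p.val + 1) (2 * S.n) with hc | hc
  · rw [Nat.mod_eq_of_lt hc]
    have : p.val + 1 + 2 * S.n - p.val = 2 * S.n + 1 := by omega
    rw [this, Nat.add_mod_left, Nat.mod_eq_of_lt h]
  · have hpv : p.val + 1 = 2 * S.n := by omega
    rw [hpv, Nat.mod_self]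
    have : 0 + 2 * S.n - p.val = 1 := by omega
    rw [this, Nat.mod_eq_of_lt h]

lemma OneVertexScheme.loopAt_endA (S : OneVertexScheme) (e : Fin S.n) :
    S.loopAt (S.endA e) = e := by
  simp [OneVertexScheme.loopAt, OneVertexScheme.endA]

lemma OneVertexScheme.end_of_loopAt (S : OneVertexScheme) (q : Fin (2 * S.n)) :
    q = S.endA (S.loopAt q) ∨ q = S.endB (S.loopAt q) := by
  unfold OneVertexScheme.loopAt OneVertexScheme.endA OneVertexScheme.endB
  rcases h : S.ends.symm q with a | a
  · left
    simp only [Sum.elim_inl, id_eq]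
    rw [← h, Equiv.apply_symm_apply]
  · right
    simp only [Sum.elim_inr, id_eq]
    rw [← h, Equiv.apply_symm_apply]

open Fin.NatCast in
lemma exists_flip {m : ℕ} [NeZero m] (c : Fin m → Prop) (p0 q0 : Fin m) (h0 : ¬ c p0)
    (h1 : c q0) : ∃ p, ¬ c p ∧ c (p + 1) := by
  by_contra hcon
  push_neg at hcon
  have key : ∀ k : ℕ, ¬ c (p0 + (k : Fin m)) := by
    intro k
    induction k with
    | zero => simpa using h0
    | succ k ih =>
        have := hcon (p0 + (k : Fin m)) ih
        have hk : ((k + 1 : ℕ) : Fin m) = (k : Fin m) + 1 := by push_cast; ring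
        rw [hk, ← add_assoc]
        exact this
  have := key ((q0 - p0).val)
  rw [Fin.cast_val_eq_self, add_sub_cancel] at this
  exact this h1

theorem concatenation_move_makes_t_orienting (S : OneVertexScheme)
    (hall : ∀ e, S.IsOrienting e ∨ (S.TwoSided e ∧ ¬ S.Separating e))
    (hex1 : ∃ e, S.IsOrienting e)
    (hex2 : ∃ e, S.TwoSided e ∧ ¬ S.Separating e) :
    (∃ o t, S.IsOrienting o ∧ S.TwoSided t ∧ ¬ S.Separating t ∧ S.AdjacentEnds o t) ∧
    (∀ o t : Fin S.n,
      S.IsOrienting o → S.TwoSided t → ¬ S.Separating t → S.AdjacentEnds o t →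
      ∀ (S' : OneVertexScheme) (ι : Fin S.n → Fin S'.n),
        IsConcatenationReplace S o t S' ι →
        ∀ (S'' : OneVertexScheme) (κ : Fin S''.n → Fin S'.n),
          IsOneSidedLoopMove S' (ι o) S'' κ →
          ∀ t'' : Fin S''.n, κ t'' = ι t → S''.IsOrienting t'') := by
  constructor
  · -- existence part
    obtain ⟨o0, ho0⟩ := hex1
    obtain ⟨t0, ht0⟩ := hex2
    have hn : 1 < 2 * S.n := by have := o0.isLt; omega
    haveI : NeZero (2 * S.n) := ⟨by omega⟩
    set c : Fin (2 * S.n) → Prop := fun p => S.TwoSided (S.loopAt p) ∧ ¬ S.Separating (S.loopAt p)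
      with hc
    by_cases hall2 : ∀ p, c p
    · -- every loop is two-sided non-separating; take an orienting loop and its successor
      refine ⟨o0, S.loopAt (S.endA o0 + 1), ho0, (hall2 (S.endA o0 + 1)).1,
        (hall2 (S.endA o0 + 1)).2, ?_⟩
      exact ⟨S.endA o0, S.endA o0 + 1, Or.inl rfl, S.end_of_loopAt _,
        Or.inl (S.cdist_add_one hn _)⟩
    · push_neg at hall2
      obtain ⟨p0, hp0⟩ := hall2
      obtain ⟨p, hpn, hps⟩ := exists_flip c p0 (S.endA t0)
        hp0 (by simpa [hc, S.loopAt_endA] using ht0)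
      have ho : S.IsOrienting (S.loopAt p) := (hall (S.loopAt p)).resolve_right hpn
      refine ⟨S.loopAt p, S.loopAt (p + 1), ho, hps.1, hps.2, ?_⟩
      exact ⟨p, p + 1, S.end_of_loopAt p, S.end_of_loopAt _, Or.inl (S.cdist_add_one hn _)⟩
  · -- main part
    intro o t ho ht hts _hadj S' ι hcr S'' κ hmv t'' ht''
    obtain ⟨hot, _, _, hbij, hsgn, hsgno, halt, halto, hnott⟩ := hcr
    obtain ⟨_, _, hκinj, hκne, hsflip, hskeep, _, haltkeep⟩ := hmv
    intro e'' he''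
    -- identify the loop of S corresponding to e''
    obtain ⟨e, hee⟩ := hbij.2 (κ e'')
    have heo : e ≠ o := by
      intro h; exact hκne e'' (by rw [← hee, h])
    have het : e ≠ t := by
      intro h
      apply he''
      apply hκinj
      rw [ht'', ← hee, h]
    -- the t''-e'' pair is not in the complemented part (since ¬ Alt' (ι o) (ι t))
    have hnotboth : ¬ (S'.Alternate (ι o) (κ t'') ∧ S'.Alternate (ι o) (κ e'')) := by
      rintro ⟨h1, _⟩
      rw [ht''] at h1
      exact hnott h1
    have halttt : S''.Alternate t'' e'' ↔ S.Alternate t e := by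
      rw [haltkeep t'' e'' hnotboth, ht'', ← hee]
      exact halt t e (Ne.symm hot) heo
    -- orienting property of o in S
    have horie : S.Alternate o e ↔ S.sign e = true := ho e heo
    rw [halttt]
    show S.Alternate t e ↔ S''.sign e'' = true
    by_cases hA : S'.Alternate (ι o) (κ e'')
    · have hx : Xor' (S.Alternate o e) (S.Alternate t e) := by
        rw [← halto e heo het, hee]; exact hA
      have hs'' : S''.sign e'' = !(S.sign e) := by
        rw [hsflip e'' hA, ← hee, hsgn e heo]
      rw [hs'']
      rcases hx with ⟨hoe, hte⟩ | ⟨hte, hoe⟩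
      · have : S.sign e = true := horie.mp hoe
        simp [this, hte]
      · have : S.sign e ≠ true := fun h => hoe (horie.mpr h)
        simp only [Bool.not_eq_true] at this
        simp [this, hte]
    · have hx : ¬ Xor' (S.Alternate o e) (S.Alternate t e) := by
        rw [← halto e heo het, hee]; exact hA
      have hs'' : S''.sign e'' = S.sign e := by
        rw [hskeep e'' hA, ← hee, hsgn e heo]
      rw [hs'']
      simp only [Xor', Xor] at hx
      push_neg at hx
      constructor
      · intro hte
        exact horie.mp (hx.2 hte)
      · intro hse
        exact hx.1 (horie.mpr hse)
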